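/- For every integer m ≥ 4 with m ≠ 5, there exist at least two distinct primes p, q with m < p < 2m and m < q < 2m. -/

import Mathlib

open Real in

private theorem my_real_main_inequality {x : ℝ} (x_large : (512 : ℝ) ≤ x) :
    x * (2 * x) * (2 * x) ^ √(2 * x) * 4 ^ (2 * x / 3) ≤ 4 ^ x := by
  let f : ℝ → ℝ := fun x => log x + log (2 * x) + √(2 * x) * log (2 * x) - log 4 / 3 * x
  have hf' : ∀ x, 0 < x → 0 < x * (2 * x) * (2 * x) ^ √(2 * x) / 4 ^ (x / 3) := fun x h =>
    div_pos (mul_pos (mul_pos h (by linarith)) (rpow_pos_of_pos (mul_pos two_pos h) _))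
      (rpow_pos_of_pos four_pos _)
  have hf : ∀ x, 0 < x → f x = log (x * (2 * x) * (2 * x) ^ √(2 * x) / 4 ^ (x / 3)) := by
    intro x h5
    have h6 := mul_pos (zero_lt_two' ℝ) h5
    have h7 := rpow_pos_of_pos h6 (√(2 * x))
    rw [log_div (mul_pos (mul_pos h5 h6) h7).ne' (rpow_pos_of_pos four_pos _).ne',
      log_mul (mul_pos h5 h6).ne' h7.ne', log_mul h5.ne' h6.ne',
      log_rpow h6, log_rpow zero_lt_four, ← mul_div_right_comm, ← mul_div, mul_comm x]
  have h5 : 0 < x := lt_of_lt_of_le (by norm_num1) x_large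
  rw [show x * (2 * x) * (2 * x) ^ √(2 * x) * 4 ^ (2 * x / 3)
      = x * (2 * x) * (2 * x) ^ √(2 * x) * 4 ^ (2 * x / 3) from rfl,
    ← div_le_one (rpow_pos_of_pos four_pos x), ← div_div_eq_mul_div, ← rpow_sub four_pos, ←
    mul_div 2 x, mul_div_left_comm, ← mul_one_sub, (by norm_num1 : (1 : ℝ) - 2 / 3 = 1 / 3),
    mul_one_div, ← log_nonpos_iff (hf' x h5).le, ← hf x h5]
  have h : ConcaveOn ℝ (Set.Ioi 0.5) f := by
    apply ConcaveOn.sub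
    · apply ConcaveOn.add
      · apply ConcaveOn.add
        · exact strictConcaveOn_log_Ioi.concaveOn.subset
            (Set.Ioi_subset_Ioi (by norm_num)) (convex_Ioi 0.5)
        · have hc := (strictConcaveOn_log_Ioi.concaveOn.comp_linearMap
            ((2 : ℝ) • LinearMap.id)).subset (fun y hy => by
              simp only [Set.mem_Ioi, Set.mem_preimage, LinearMap.smul_apply,
                LinearMap.id_coe, id_eq, smul_eq_mul] at hy ⊢
              linarith [hy]) (convex_Ioi 0.5)
          exact hc
      convert ((strictConcaveOn_sqrt_mul_log_Ioi.concaveOn.comp_linearMap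
        ((2 : ℝ) • LinearMap.id))) using 1
      · rfl
      · rfl
      on_goal 2 => rfl
      ext x
      simp only [Set.mem_Ioi, Set.mem_preimage, LinearMap.smul_apply,
        LinearMap.id_coe, id_eq, smul_eq_mul]
      rw [← mul_lt_mul_iff_right₀ (two_pos)]
      norm_num1
      rfl
    apply ConvexOn.smul
    · refine div_nonneg (log_nonneg (by norm_num1)) (by norm_num1)
    · exact convexOn_id (convex_Ioi (0.5 : ℝ))
  suffices ∃ x1 x2, 0.5 < x1 ∧ x1 < x2 ∧ x2 ≤ x ∧ 0 ≤ f x1 ∧ f x2 ≤ 0 by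
    obtain ⟨x1, x2, h1, h2, h0, h3, h4⟩ := this
    exact (h.right_le_of_le_left'' h1 ((h1.trans h2).trans_le h0) h2 h0 (h4.trans h3)).trans h4
  refine ⟨18, 512, by norm_num1, by norm_num1, x_large, ?_, ?_⟩
  · have : √(2 * 18 : ℝ) = 6 := (sqrt_eq_iff_mul_self_eq_of_pos (by norm_num1)).mpr (by norm_num1)
    rw [hf _ (by norm_num1), log_nonneg_iff (by positivity), this, one_le_div (by norm_num1)]
    norm_num1
  · have : √(2 * 512) = 32 :=
      (sqrt_eq_iff_mul_self_eq_of_pos (by norm_num1)).mpr (by norm_num1)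
    rw [hf _ (by norm_num1), log_nonpos_iff (hf' _ (by norm_num1)).le, this,
        div_le_one (by positivity)]
    rw [show ((2:ℝ) * 512) = 1024 by norm_num]
    rw [show (32:ℝ) = ((32:ℕ):ℝ) by norm_num, rpow_natCast]
    rw [show (512:ℝ) * 1024 * 1024 ^ (32:ℕ) = 2 ^ (339:ℕ) by norm_num [pow_succ]]
    rw [← rpow_natCast 2 339, show (4:ℝ) = 2 ^ (2:ℝ) by
      rw [show (2:ℝ) = ((2:ℕ):ℝ) from by norm_num, rpow_natCast]; norm_num,
      ← rpow_mul (by norm_num : (0:ℝ) ≤ 2)]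
    apply rpow_le_rpow_of_exponent_le one_le_two
    norm_num


open Nat

theorem my_small_part_le (n : ℕ) (n_large : 2 < n) :
    (∏ p ∈ Finset.range (2 * n / 3 + 1), p ^ (centralBinom n).factorization p)
      ≤ (2 * n) ^ Nat.sqrt (2 * n) * 4 ^ (2 * n / 3) := by
  have n_pos : 0 < n := (Nat.zero_le _).trans_lt n_large
  have n2_pos : 1 ≤ 2 * n := mul_pos (zero_lt_two' ℕ) n_pos
  let S := (Finset.range (2 * n / 3 + 1)).filter Nat.Prime
  let f x := x ^ n.centralBinom.factorization x
  have : ∏ x ∈ S, f x = ∏ x ∈ Finset.range (2 * n / 3 + 1), f x := by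
    refine Finset.prod_filter_of_ne fun p _ h => ?_
    contrapose! h; dsimp only [f]
    rw [factorization_eq_zero_of_not_prime n.centralBinom h, _root_.pow_zero]
  rw [show (∏ p ∈ Finset.range (2 * n / 3 + 1), p ^ (centralBinom n).factorization p)
      = ∏ x ∈ Finset.range (2 * n / 3 + 1), f x from rfl, ← this,
    ← Finset.prod_filter_mul_prod_filter_not S (· ≤ Nat.sqrt (2 * n))]
  apply mul_le_mul'
  · refine (Finset.prod_le_prod' fun p _ => (?_ : f p ≤ 2 * n)).trans ?_
    · exact pow_factorization_choose_le (mul_pos two_pos n_pos)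
    have : (Finset.Icc 1 (Nat.sqrt (2 * n))).card = Nat.sqrt (2 * n) := by
      rw [Nat.card_Icc, Nat.add_sub_cancel]
    rw [Finset.prod_const]
    refine pow_right_mono₀ n2_pos ((Finset.card_le_card fun x hx => ?_).trans this.le)
    obtain ⟨h1, h2⟩ := Finset.mem_filter.1 hx
    exact Finset.mem_Icc.mpr ⟨(Finset.mem_filter.1 h1).2.one_lt.le, h2⟩
  · refine le_trans ?_ (primorial_le_4_pow (2 * n / 3))
    refine (Finset.prod_le_prod' fun p hp => (?_ : f p ≤ p)).trans ?_
    · obtain ⟨h1, h2⟩ := Finset.mem_filter.1 hp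
      refine (pow_right_mono₀ (Finset.mem_filter.1 h1).2.one_lt.le ?_).trans (pow_one p).le
      exact Nat.factorization_choose_le_one (Nat.sqrt_lt'.mp <| not_le.1 h2)
    refine Finset.prod_le_prod_of_subset_of_one_le' (Finset.filter_subset _ _) ?_
    exact fun p hp _ => (Finset.mem_filter.1 hp).2.one_lt.le

theorem my_centralBinom_le (n : ℕ) (n_large : 2 < n)
    (hu : ∀ p q : ℕ, p.Prime → q.Prime → n < p → p ≤ 2 * n → n < q → q ≤ 2 * n → p = q) :
    centralBinom n ≤ (2 * n) ^ Nat.sqrt (2 * n) * 4 ^ (2 * n / 3) * (2 * n) := by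
  obtain ⟨p0, hp0, hnp0, hp02n⟩ := Nat.exists_prime_lt_and_le_two_mul n (by omega)
  have hsplit : centralBinom n
      = (∏ p ∈ Finset.range (2 * n / 3 + 1), p ^ (centralBinom n).factorization p)
        * ∏ p ∈ Finset.Ico (2 * n / 3 + 1) (2 * n + 1), p ^ (centralBinom n).factorization p := by
    conv_lhs => rw [← n.prod_pow_factorization_centralBinom]
    simp only [Finset.range_eq_Ico]
    exact (Finset.prod_Ico_consecutive (fun p => p ^ (centralBinom n).factorization p) (Nat.zero_le (2 * n / 3 + 1)) (by omega : 2 * n / 3 + 1 ≤ 2 * n + 1)).symm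
  have htail : (∏ p ∈ Finset.Ico (2 * n / 3 + 1) (2 * n + 1),
      p ^ (centralBinom n).factorization p) ≤ 2 * n := by
    calc (∏ p ∈ Finset.Ico (2 * n / 3 + 1) (2 * n + 1), p ^ (centralBinom n).factorization p)
        ≤ ∏ p ∈ Finset.Ico (2 * n / 3 + 1) (2 * n + 1), if p = p0 then 2 * n else 1 := by
          apply Finset.prod_le_prod'
          intro p hp
          rw [Finset.mem_Ico] at hp
          by_cases hpp0 : p = p0
          · simp only [hpp0, if_pos rfl]
            exact hpp0 ▸ pow_factorization_choose_le (by omega)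
          · rw [if_neg hpp0]
            by_cases hpr : p.Prime
            · by_cases hpn : p ≤ n
              · rw [factorization_centralBinom_of_two_mul_self_lt_three_mul n_large hpn
                  (by omega), pow_zero]
              · exact absurd (hu p p0 hpr hp0 (by omega) (by omega) hnp0 hp02n) hpp0
            · rw [factorization_eq_zero_of_not_prime _ hpr, pow_zero]
      _ ≤ 2 * n := by
          rw [Finset.prod_ite_eq' (Finset.Ico (2 * n / 3 + 1) (2 * n + 1)) p0 (fun _ => 2 * n)]
          split <;> omega
  calc centralBinom n = _ := hsplit
    _ ≤ ((2 * n) ^ Nat.sqrt (2 * n) * 4 ^ (2 * n / 3)) * (2 * n) :=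
        Nat.mul_le_mul (my_small_part_le n n_large) htail

open Nat in
theorem my_main_inequality {n : ℕ} (n_large : 512 ≤ n) :
    n * (2 * n) * (2 * n) ^ Nat.sqrt (2 * n) * 4 ^ (2 * n / 3) ≤ 4 ^ n := by
  rw [← @Nat.cast_le ℝ]
  simp only [Nat.cast_mul, Nat.cast_pow, Nat.cast_ofNat, ← Real.rpow_natCast]
  refine _root_.trans ?_ (my_real_main_inequality (by exact_mod_cast n_large))
  gcongr
  · have n2_pos : 0 < 2 * n := by positivity
    exact_mod_cast n2_pos
  · exact_mod_cast Real.nat_sqrt_le_real_sqrt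
  · norm_num1
  · exact Nat.cast_div_le.trans (by norm_cast)

open Nat in
theorem my_two_primes_eventually (n : ℕ) (n_large : 512 ≤ n) :
    ∃ p q : ℕ, p.Prime ∧ q.Prime ∧ p ≠ q ∧ n < p ∧ p ≤ 2 * n ∧ n < q ∧ q ≤ 2 * n := by
  by_contra hc
  have hu : ∀ p q : ℕ, p.Prime → q.Prime → n < p → p ≤ 2 * n → n < q → q ≤ 2 * n → p = q := by
    intro p q pp pq h1 h2 h3 h4
    by_contra hne
    exact hc ⟨p, q, pp, pq, hne, h1, h2, h3, h4⟩
  have H1 := my_main_inequality n_large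
  have H2 : 4 ^ n < n * centralBinom n := Nat.four_pow_lt_mul_centralBinom n (by omega)
  have H3 := my_centralBinom_le n (by omega) hu
  have H4 : n * centralBinom n ≤ n * (2 * n) * (2 * n) ^ Nat.sqrt (2 * n) * 4 ^ (2 * n / 3) := by
    calc n * centralBinom n
        ≤ n * ((2 * n) ^ Nat.sqrt (2 * n) * 4 ^ (2 * n / 3) * (2 * n)) :=
          Nat.mul_le_mul_left n H3
      _ = n * (2 * n) * (2 * n) ^ Nat.sqrt (2 * n) * 4 ^ (2 * n / 3) := by ring
  omega

theorem cover_lemma (P1 P2 : ℕ) {m a b : ℕ} (h1 : P1.Prime) (h2 : P2.Prime) (ham : a ≤ m)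
    (hmb : m < b) (hbP : b ≤ P1) (hPP : P1 < P2) (h2a : P2 < 2 * a) :
    ∃ p q : ℕ, p.Prime ∧ q.Prime ∧ p ≠ q ∧ m < p ∧ p < 2 * m ∧ m < q ∧ q < 2 * m :=
  ⟨P1, P2, h1, h2, by omega, by omega, by omega, by omega, by omega⟩

theorem stmt_1 (m : ℕ) (h4 : 4 ≤ m) (h5 : m ≠ 5) :
    ∃ p q : ℕ, p.Prime ∧ q.Prime ∧ p ≠ q ∧
      m < p ∧ p < 2 * m ∧ m < q ∧ q < 2 * m := by
  rcases le_or_gt 512 m with hm | hm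
  · obtain ⟨p, q, hp, hq, hpq, h1, h2, h3, h4'⟩ := my_two_primes_eventually m hm
    have hne : ∀ r : ℕ, r.Prime → r ≠ 2 * m := by
      intro r hr hre
      have hev : Even r := ⟨m, by omega⟩
      rw [hr.even_iff] at hev
      omega
    exact ⟨p, q, hp, hq, hpq, h1, lt_of_le_of_ne h2 (hne p hp), h3,
      lt_of_le_of_ne h4' (hne q hq)⟩
  rcases lt_or_ge m 5 with h | h
  · exact cover_lemma 5 7 (by norm_num) (by norm_num) h4 h (by norm_num) (by norm_num)
      (by norm_num : (7:ℕ) < 2 * 4)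
  have h6 : 6 ≤ m := by omega
  rcases lt_or_ge m 7 with h | h
  · exact cover_lemma 7 11 (by norm_num) (by norm_num) h6 h (by norm_num) (by norm_num)
      (by norm_num : (11:ℕ) < 2 * 6)
  rcases lt_or_ge m 9 with h' | h'
  · exact cover_lemma 11 13 (by norm_num) (by norm_num) h h' (by norm_num) (by norm_num)
      (by norm_num : (13:ℕ) < 2 * 7)
  rcases lt_or_ge m 11 with h | h
  · exact cover_lemma 11 13 (by norm_num) (by norm_num) h' h (by norm_num) (by norm_num)
      (by norm_num : (13:ℕ) < 2 * 9)
  rcases lt_or_ge m 15 with h' | h'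
  · exact cover_lemma 17 19 (by norm_num) (by norm_num) h h' (by norm_num) (by norm_num)
      (by norm_num : (19:ℕ) < 2 * 11)
  rcases lt_or_ge m 21 with h | h
  · exact cover_lemma 23 29 (by norm_num) (by norm_num) h' h (by norm_num) (by norm_num)
      (by norm_num : (29:ℕ) < 2 * 15)
  rcases lt_or_ge m 29 with h' | h'
  · exact cover_lemma 29 31 (by norm_num) (by norm_num) h h' (by norm_num) (by norm_num)
      (by norm_num : (31:ℕ) < 2 * 21)
  rcases lt_or_ge m 41 with h | h
  · exact cover_lemma 41 43 (by norm_num) (by norm_num) h' h (by norm_num) (by norm_num)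
      (by norm_num : (43:ℕ) < 2 * 29)
  rcases lt_or_ge m 56 with h' | h'
  · exact cover_lemma 59 61 (by norm_num) (by norm_num) h h' (by norm_num) (by norm_num)
      (by norm_num : (61:ℕ) < 2 * 41)
  rcases lt_or_ge m 79 with h | h
  · exact cover_lemma 79 83 (by norm_num) (by norm_num) h' h (by norm_num) (by norm_num)
      (by norm_num : (83:ℕ) < 2 * 56)
  rcases lt_or_ge m 111 with h' | h'
  · exact cover_lemma 113 127 (by norm_num) (by norm_num) h h' (by norm_num) (by norm_num)
      (by norm_num : (127:ℕ) < 2 * 79)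
  rcases lt_or_ge m 157 with h | h
  · exact cover_lemma 157 163 (by norm_num) (by norm_num) h' h (by norm_num) (by norm_num)
      (by norm_num : (163:ℕ) < 2 * 111)
  rcases lt_or_ge m 220 with h' | h'
  · exact cover_lemma 223 227 (by norm_num) (by norm_num) h h' (by norm_num) (by norm_num)
      (by norm_num : (227:ℕ) < 2 * 157)
  rcases lt_or_ge m 311 with h | h
  · exact cover_lemma 311 313 (by norm_num) (by norm_num) h' h (by norm_num) (by norm_num)
      (by norm_num : (313:ℕ) < 2 * 220)
  rcases lt_or_ge m 439 with h' | h'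
  · exact cover_lemma 439 443 (by norm_num) (by norm_num) h h' (by norm_num) (by norm_num)
      (by norm_num : (443:ℕ) < 2 * 311)
  · exact cover_lemma 521 523 (by norm_num) (by norm_num) h' hm (by norm_num) (by norm_num)
      (by norm_num : (523:ℕ) < 2 * 439)
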